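/- Let m ≥ 1, x_k = k/2^m, and y_k = φ₂(k) for k = 0,...,2^m−1. Then ∑_{k,l=0}^{2^m−1} |x_k − x_l|·|y_k − y_l| = (8(4^m − 1) + 9m² + 3m)/72. -/

import Mathlib

/-- The base-2 digit reversal (radical inverse) function. -/
noncomputable def phi2 (k : ℕ) : ℝ :=
  ∑ i ∈ Finset.range (k + 1), if Nat.testBit k i then (1 : ℝ) / 2 ^ (i + 1) else 0

lemma phi2_ext (k N : ℕ) (h : k + 1 ≤ N) :
    phi2 k = ∑ i ∈ Finset.range N, if Nat.testBit k i then (1 : ℝ) / 2 ^ (i + 1) else 0 := by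
  unfold phi2
  apply Finset.sum_subset (Finset.range_subset_range.2 h)
  intro i _ hi
  simp only [Finset.mem_range, not_lt] at hi
  have : k < 2 ^ i := lt_of_lt_of_le (Nat.lt_two_pow_self (n := k)) (Nat.pow_le_pow_right (by norm_num) (by omega))
  simp [Nat.testBit_lt_two_pow this]

lemma phi2_zero : phi2 0 = 0 := by simp [phi2]

lemma phi2_two_mul (a : ℕ) : phi2 (2 * a) = phi2 a / 2 := by
  rcases Nat.eq_zero_or_pos a with rfl | ha
  · simp [phi2_zero]
  rw [phi2_ext (2*a) (2*a+1) le_rfl, Finset.sum_range_succ']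
  have h0 : Nat.testBit (2*a) 0 = false := by
    simp [Nat.testBit_zero, Nat.mul_mod_right]
  rw [h0]
  simp only [Bool.false_eq_true, if_false, add_zero]
  rw [phi2_ext a (2*a) (by omega), Finset.sum_div]
  apply Finset.sum_congr rfl
  intro i _
  have hb : Nat.testBit (2*a) (i+1) = Nat.testBit a i := by
    rw [Nat.testBit_succ]
    congr 1
    omega
  rw [hb]
  split <;> ring

lemma phi2_two_mul_add_one (a : ℕ) : phi2 (2 * a + 1) = 1/2 + phi2 a / 2 := by
  rw [phi2_ext (2*a+1) (2*a+2) le_rfl, Finset.sum_range_succ']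
  have h0 : Nat.testBit (2*a+1) 0 = true := by
    simp [Nat.testBit_zero, Nat.mul_mod_right, Nat.add_mul_mod_self_left]
  rw [h0]
  simp only [if_pos]
  rw [phi2_ext a (2*a+1) (by omega), Finset.sum_div]
  have : ∀ i ∈ Finset.range (2*a+1),
      (if Nat.testBit (2*a+1) (i+1) then (1:ℝ)/2^(i+1+1) else 0)
      = (if Nat.testBit a i then (1:ℝ)/2^(i+1) else 0) / 2 := by
    intro i _
    have hb : Nat.testBit (2*a+1) (i+1) = Nat.testBit a i := by
      rw [Nat.testBit_succ]
      congr 1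
      omega
    rw [hb]; split <;> ring
  rw [Finset.sum_congr rfl this]
  norm_num
  ring

lemma phi2_nonneg (k : ℕ) : 0 ≤ phi2 k := by
  apply Finset.sum_nonneg
  intro i _
  split <;> positivity

lemma phi2_lt_one (k : ℕ) : phi2 k < 1 := by
  have h1 : phi2 k ≤ ∑ i ∈ Finset.range (k+1), (1:ℝ)/2^(i+1) := by
    apply Finset.sum_le_sum
    intro i _
    split
    · exact le_rfl
    · positivity
  have h2 : ∑ i ∈ Finset.range (k+1), (1:ℝ)/2^(i+1) < 1 := by
    have := geom_sum_eq (show (1:ℝ)/2 ≠ 1 by norm_num) (k+1)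
    have heq : ∑ i ∈ Finset.range (k+1), (1:ℝ)/2^(i+1)
        = ((1/2)^(k+1) - 1)/((1/2) - 1) * (1/2) := by
      rw [← this, Finset.sum_mul]
      apply Finset.sum_congr rfl
      intro i _
      rw [div_pow]
      ring
    rw [heq]
    have hp : (0:ℝ) < (1/2:ℝ)^(k+1) := by positivity
    have : ((1/2:ℝ)^(k+1) - 1)/((1/2) - 1) * (1/2) = 1 - (1/2)^(k+1) := by
      field_simp
      ring
    rw [this]
    linarith
  linarith

lemma sum_split (n : ℕ) (f : ℕ → ℝ) :
    ∑ k ∈ Finset.range (2 * n), f k = ∑ a ∈ Finset.range n, (f (2 * a) + f (2 * a + 1)) := by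
  induction n with
  | zero => simp
  | succ n ih =>
    rw [show 2 * (n+1) = 2*n + 1 + 1 by ring, Finset.sum_range_succ, Finset.sum_range_succ,
      Finset.sum_range_succ, ih]
    ring

lemma sum_cast_id (n : ℕ) : ∑ i ∈ Finset.range n, (i : ℝ) = n * (n - 1) / 2 := by
  induction n with
  | zero => simp
  | succ n ih =>
    rw [Finset.sum_range_succ, ih]
    push_cast
    ring

lemma sum_abs_sub (n : ℕ) :
    ∑ a ∈ Finset.range n, ∑ b ∈ Finset.range n, |(a:ℝ) - b| = n * (n^2 - 1) / 3 := by
  induction n with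
  | zero => simp
  | succ n ih =>
    rw [Finset.sum_range_succ]
    have h1 : ∀ a ∈ Finset.range n, ∑ b ∈ Finset.range (n+1), |(a:ℝ) - b|
        = (∑ b ∈ Finset.range n, |(a:ℝ) - b|) + ((n:ℝ) - a) := by
      intro a ha
      rw [Finset.sum_range_succ]
      congr 1
      rw [abs_sub_comm, abs_of_nonneg]
      have : (a:ℝ) ≤ n := by
        exact_mod_cast le_of_lt (Finset.mem_range.1 ha)
      linarith
    rw [Finset.sum_congr rfl h1, Finset.sum_add_distrib, ih]
    have h2 : ∑ b ∈ Finset.range (n+1), |(n:ℝ) - b| = ∑ b ∈ Finset.range (n+1), ((n:ℝ) - b) := by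
      apply Finset.sum_congr rfl
      intro b hb
      rw [abs_of_nonneg]
      have : (b:ℝ) ≤ n := by
        exact_mod_cast Nat.lt_succ_iff.1 (Finset.mem_range.1 hb)
      linarith
    rw [h2, Finset.sum_sub_distrib, Finset.sum_const, Finset.sum_sub_distrib, Finset.sum_const,
      sum_cast_id, sum_cast_id]
    simp only [Finset.card_range, nsmul_eq_mul]
    push_cast
    ring

lemma sum_ite_right (a n : ℕ) (h : a < n) :
    ∑ b ∈ Finset.range n, (if b ≤ a then (1:ℝ) else -1) = 2 * a + 2 - n := by
  induction n with
  | zero => omega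
  | succ n ih =>
    rw [Finset.sum_range_succ]
    rcases Nat.lt_or_ge a n with h' | h'
    · rw [ih h', if_neg (by omega)]
      push_cast
      ring
    · have han : a = n := by omega
      subst han
      rw [if_pos le_rfl]
      have : ∀ b ∈ Finset.range a, (if b ≤ a then (1:ℝ) else -1) = 1 := by
        intro b hb
        rw [if_pos (le_of_lt (Finset.mem_range.1 hb))]
      rw [Finset.sum_congr rfl this, Finset.sum_const]
      simp only [Finset.card_range, nsmul_eq_mul, mul_one]
      push_cast
      ring

lemma sum_ite_left (b n : ℕ) (h : b < n) :
    ∑ a ∈ Finset.range n, (if b ≤ a then (1:ℝ) else -1) = n - 2 * b := by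
  induction n with
  | zero => omega
  | succ n ih =>
    rw [Finset.sum_range_succ, if_pos (by omega)]
    rcases Nat.lt_or_ge b n with h' | h'
    · rw [ih h']
      push_cast
      ring
    · have : b = n := by omega
      subst this
      have : ∀ a ∈ Finset.range b, (if b ≤ a then (1:ℝ) else -1) = -1 := by
        intro a ha
        rw [if_neg (by exact Nat.not_le.2 (Finset.mem_range.1 ha))]
      rw [Finset.sum_congr rfl this, Finset.sum_const]
      simp only [Finset.card_range, nsmul_eq_mul, mul_neg, mul_one]
      push_cast
      ring

lemma sum_s (n : ℕ) :
    ∑ a ∈ Finset.range n, ∑ b ∈ Finset.range n, (if b ≤ a then (1:ℝ) else -1) = n := by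
  have : ∀ a ∈ Finset.range n, ∑ b ∈ Finset.range n, (if b ≤ a then (1:ℝ) else -1)
      = 2 * a + 2 - n := fun a ha => sum_ite_right a n (Finset.mem_range.1 ha)
  rw [Finset.sum_congr rfl this]
  rw [Finset.sum_sub_distrib, Finset.sum_add_distrib, ← Finset.mul_sum, sum_cast_id,
    Finset.sum_const, Finset.sum_const]
  simp only [Finset.card_range, nsmul_eq_mul]
  push_cast
  ring

lemma sum_s_phi (n : ℕ) :
    ∑ a ∈ Finset.range n, ∑ b ∈ Finset.range n, (if b ≤ a then (1:ℝ) else -1) * (phi2 a - phi2 b)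
    = ∑ a ∈ Finset.range n, (4 * a + 2 - 2 * n) * phi2 a := by
  have expand : ∀ a ∈ Finset.range n,
      ∑ b ∈ Finset.range n, (if b ≤ a then (1:ℝ) else -1) * (phi2 a - phi2 b)
      = (2 * a + 2 - n) * phi2 a - ∑ b ∈ Finset.range n, (if b ≤ a then (1:ℝ) else -1) * phi2 b := by
    intro a ha
    have : ∀ b ∈ Finset.range n, (if b ≤ a then (1:ℝ) else -1) * (phi2 a - phi2 b)
        = (if b ≤ a then (1:ℝ) else -1) * phi2 a - (if b ≤ a then (1:ℝ) else -1) * phi2 b := by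
      intro b _
      ring
    rw [Finset.sum_congr rfl this, Finset.sum_sub_distrib, ← Finset.sum_mul,
      sum_ite_right a n (Finset.mem_range.1 ha)]
  rw [Finset.sum_congr rfl expand, Finset.sum_sub_distrib]
  have swap : ∑ a ∈ Finset.range n, ∑ b ∈ Finset.range n, (if b ≤ a then (1:ℝ) else -1) * phi2 b
      = ∑ b ∈ Finset.range n, ((n:ℝ) - 2 * b) * phi2 b := by
    rw [Finset.sum_comm]
    apply Finset.sum_congr rfl
    intro b hb
    rw [← Finset.sum_mul, sum_ite_left b n (Finset.mem_range.1 hb)]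
  rw [swap, ← Finset.sum_sub_distrib]
  apply Finset.sum_congr rfl
  intro a _
  ring

lemma sum_phi (m : ℕ) : ∑ a ∈ Finset.range (2^m), phi2 a = ((2:ℝ)^m - 1) / 2 := by
  induction m with
  | zero => simp [phi2_zero]
  | succ m ih =>
    rw [pow_succ, mul_comm ((2:ℕ)^m) 2, sum_split]
    have : ∀ a ∈ Finset.range (2^m), phi2 (2*a) + phi2 (2*a+1) = phi2 a + 1/2 := by
      intro a _
      rw [phi2_two_mul, phi2_two_mul_add_one]
      ring
    rw [Finset.sum_congr rfl this, Finset.sum_add_distrib, ih, Finset.sum_const]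
    simp only [Finset.card_range, nsmul_eq_mul]
    push_cast
    ring

lemma sum_mul_phi (m : ℕ) :
    ∑ a ∈ Finset.range (2^m), (a:ℝ) * phi2 a = ((2:ℝ)^m - 1)^2 / 4 + m * 2^m / 8 := by
  induction m with
  | zero => simp [phi2_zero]
  | succ m ih =>
    rw [pow_succ, mul_comm ((2:ℕ)^m) 2, sum_split]
    have : ∀ a ∈ Finset.range (2^m),
        ((2*a : ℕ):ℝ) * phi2 (2*a) + ((2*a+1 : ℕ):ℝ) * phi2 (2*a+1)
        = 2 * ((a:ℝ) * phi2 a) + (a:ℝ) + phi2 a / 2 + 1/2 := by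
      intro a _
      rw [phi2_two_mul, phi2_two_mul_add_one]
      push_cast
      ring
    rw [Finset.sum_congr rfl this, Finset.sum_add_distrib, Finset.sum_add_distrib,
      Finset.sum_add_distrib, ← Finset.mul_sum, ih, sum_cast_id, ← Finset.sum_div,
      sum_phi, Finset.sum_const]
    simp only [Finset.card_range, nsmul_eq_mul]
    push_cast
    ring

lemma point (a b : ℕ) :
    |2*(a:ℝ) - 2*(b:ℝ)| * |phi2 (2*a) - phi2 (2*b)|
      + |2*(a:ℝ) - (2*(b:ℝ)+1)| * |phi2 (2*a) - phi2 (2*b+1)|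
      + (|2*(a:ℝ)+1 - 2*(b:ℝ)| * |phi2 (2*a+1) - phi2 (2*b)|
      + |2*(a:ℝ)+1 - (2*(b:ℝ)+1)| * |phi2 (2*a+1) - phi2 (2*b+1)|)
    = 2 * (|(a:ℝ) - b| * |phi2 a - phi2 b|)
      + (2 * |(a:ℝ) - b|
      + ((if a = b then (1:ℝ) else 0)
      + (if b ≤ a then (1:ℝ) else -1) * (phi2 a - phi2 b))) := by
  have hp0 := phi2_nonneg a
  have hp1 := phi2_lt_one a
  have hq0 := phi2_nonneg b
  have hq1 := phi2_lt_one b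
  rw [phi2_two_mul, phi2_two_mul, phi2_two_mul_add_one, phi2_two_mul_add_one]
  have e1 : |phi2 a / 2 - phi2 b / 2| = |phi2 a - phi2 b| / 2 := by
    rw [show phi2 a / 2 - phi2 b / 2 = (phi2 a - phi2 b)/2 by ring, abs_div]
    norm_num
  have e2 : |phi2 a / 2 - (1/2 + phi2 b / 2)| = (1 - phi2 a + phi2 b) / 2 := by
    rw [abs_of_nonpos (by linarith)]
    ring
  have e3 : |1/2 + phi2 a / 2 - phi2 b / 2| = (1 + phi2 a - phi2 b) / 2 := by
    rw [abs_of_nonneg (by linarith)]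
    ring
  have e4 : |1/2 + phi2 a / 2 - (1/2 + phi2 b / 2)| = |phi2 a - phi2 b| / 2 := by
    rw [show 1/2 + phi2 a / 2 - (1/2 + phi2 b / 2) = (phi2 a - phi2 b)/2 by ring, abs_div]
    norm_num
  rw [e1, e2, e3, e4]
  rcases lt_trichotomy a b with h | h | h
  · have hab : (a:ℝ) + 1 ≤ b := by exact_mod_cast h
    rw [abs_of_nonpos (show 2*(a:ℝ) - 2*(b:ℝ) ≤ 0 by linarith),
      abs_of_nonpos (show 2*(a:ℝ) - (2*(b:ℝ)+1) ≤ 0 by linarith),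
      abs_of_nonpos (show 2*(a:ℝ)+1 - 2*(b:ℝ) ≤ 0 by linarith),
      abs_of_nonpos (show 2*(a:ℝ)+1 - (2*(b:ℝ)+1) ≤ 0 by linarith),
      abs_of_nonpos (show (a:ℝ) - (b:ℝ) ≤ 0 by linarith),
      if_neg (by omega), if_neg (by omega)]
    ring
  · subst h
    rw [show 2*(a:ℝ) - (2*(a:ℝ)+1) = -1 by ring, show 2*(a:ℝ)+1 - 2*(a:ℝ) = 1 by ring]
    simp only [sub_self, abs_zero, abs_neg, abs_one, if_pos rfl, if_pos le_rfl]
    norm_num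
  · have hab : (b:ℝ) + 1 ≤ a := by exact_mod_cast h
    rw [abs_of_nonneg (show (0:ℝ) ≤ 2*(a:ℝ) - 2*(b:ℝ) by linarith),
      abs_of_nonneg (show (0:ℝ) ≤ 2*(a:ℝ) - (2*(b:ℝ)+1) by linarith),
      abs_of_nonneg (show (0:ℝ) ≤ 2*(a:ℝ)+1 - 2*(b:ℝ) by linarith),
      abs_of_nonneg (show (0:ℝ) ≤ 2*(a:ℝ)+1 - (2*(b:ℝ)+1) by linarith),
      abs_of_nonneg (show (0:ℝ) ≤ (a:ℝ) - (b:ℝ) by linarith),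
      if_neg (by omega), if_pos (by omega)]
    ring

lemma T_formula (m : ℕ) :
    ∑ k ∈ Finset.range (2^m), ∑ l ∈ Finset.range (2^m), |(k:ℝ) - (l:ℝ)| * |phi2 k - phi2 l|
    = 2^m * (8 * (4:ℝ)^m - 8 + 9*(m:ℝ)^2 + 3*(m:ℝ)) / 72 := by
  induction m with
  | zero => norm_num
  | succ m ih =>
    rw [pow_succ, mul_comm ((2:ℕ)^m) 2, sum_split]
    have step1 : ∀ a ∈ Finset.range (2^m),
        (∑ l ∈ Finset.range (2*2^m), |((2*a:ℕ):ℝ) - (l:ℝ)| * |phi2 (2*a) - phi2 l|)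
        + (∑ l ∈ Finset.range (2*2^m), |((2*a+1:ℕ):ℝ) - (l:ℝ)| * |phi2 (2*a+1) - phi2 l|)
        = ∑ b ∈ Finset.range (2^m),
            (2 * (|(a:ℝ) - b| * |phi2 a - phi2 b|)
            + (2 * |(a:ℝ) - b|
            + ((if a = b then (1:ℝ) else 0)
            + (if b ≤ a then (1:ℝ) else -1) * (phi2 a - phi2 b)))) := by
      intro a _
      rw [sum_split, sum_split, ← Finset.sum_add_distrib]
      apply Finset.sum_congr rfl
      intro b _
      push_cast
      exact point a b
    rw [Finset.sum_congr rfl step1]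
    simp only [Finset.sum_add_distrib, ← Finset.mul_sum]
    rw [ih, sum_abs_sub, sum_s_phi]
    have hdiag : ∑ a ∈ Finset.range (2^m), ∑ b ∈ Finset.range (2^m),
        (if a = b then (1:ℝ) else 0) = 2^m := by
      have h1 : ∀ a ∈ Finset.range (2^m),
          (∑ b ∈ Finset.range (2^m), if a = b then (1:ℝ) else 0) = 1 := by
        intro a ha
        rw [Finset.sum_ite_eq, if_pos ha]
      rw [Finset.sum_congr rfl h1, Finset.sum_const]
      simp
    rw [hdiag]
    have hsp : ∑ a ∈ Finset.range (2^m), (4*(a:ℝ) + 2 - 2*((2^m:ℕ):ℝ)) * phi2 a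
        = m * 2^m / 2 := by
      have h1 : ∀ a ∈ Finset.range (2^m), (4*(a:ℝ) + 2 - 2*((2^m:ℕ):ℝ)) * phi2 a
          = 4 * ((a:ℝ) * phi2 a) + (2 - 2*((2^m:ℕ):ℝ)) * phi2 a := by
        intro a _
        ring
      rw [Finset.sum_congr rfl h1, Finset.sum_add_distrib, ← Finset.mul_sum, ← Finset.mul_sum,
        sum_mul_phi, sum_phi]
      push_cast
      ring
    rw [hsp]
    have h4 : (4:ℝ)^m = (2:ℝ)^m * 2^m := by
      rw [show (4:ℝ) = 2*2 by norm_num, mul_pow]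
    push_cast
    simp only [pow_succ]
    rw [h4]
    ring

theorem hammersley_S10 (m : ℕ) (hm : 1 ≤ m) :
    ∑ k ∈ Finset.range (2 ^ m), ∑ l ∈ Finset.range (2 ^ m),
      |(k : ℝ) / 2 ^ m - (l : ℝ) / 2 ^ m| * |phi2 k - phi2 l|
      = (8 * ((4:ℝ) ^ m - 1) + 9 * (m : ℝ) ^ 2 + 3 * (m : ℝ)) / 72 := by
  have hpow : (0:ℝ) < 2 ^ m := by positivity
  have h1 : ∀ k ∈ Finset.range (2^m), ∀ l ∈ Finset.range (2^m),
      |(k : ℝ) / 2 ^ m - (l : ℝ) / 2 ^ m| * |phi2 k - phi2 l|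
      = (|(k:ℝ) - (l:ℝ)| * |phi2 k - phi2 l|) / 2 ^ m := by
    intro k _ l _
    rw [div_sub_div_same, abs_div, abs_of_pos hpow]
    ring
  rw [Finset.sum_congr rfl (fun k hk => Finset.sum_congr rfl (h1 k hk))]
  simp only [← Finset.sum_div]
  rw [T_formula]
  have h2 : (2:ℝ)^m ≠ 0 := ne_of_gt hpow
  field_simp
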